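/- arXiv:2605.28624 — 2 statements merged into one kernel-verified Lean document; each statement's English description precedes it below -/
import Mathlib

section
/- A finite-type scheme over an uncountable algebraically closed field k whose set of k-points is countable has only finitely many k-points. -/
open AlgebraicGeometry CategoryTheory

open Cardinal Polynomial in
lemma stmt4_key {k A : Type} [Field k] [IsAlgClosed k] (hk : ¬ Countable k)
    [CommRing A] [Algebra k A] [Algebra.FiniteType k A]
    (h : Countable (A →ₐ[k] k)) : Finite (A →ₐ[k] k) := by
  by_contra hfin
  rw [not_finite_iff_infinite] at hfin
  classical
  -- find a generator with infinitely many values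
  obtain ⟨s, hs⟩ : (⊤ : Subalgebra k A).FG := Algebra.FiniteType.out
  have hex : ∃ a : A, (Set.range fun φ : A →ₐ[k] k => φ a).Infinite := by
    by_contra hcon
    push_neg at hcon
    have : ∀ a : A, Finite ↥(Set.range fun φ : A →ₐ[k] k => φ a) :=
      fun a => (hcon a).to_subtype
    have hinj : Function.Injective
        (fun (φ : A →ₐ[k] k) (a : s) => (⟨φ a, Set.mem_range_self φ⟩ :
          ↥(Set.range fun ψ : A →ₐ[k] k => ψ (a : A)))) := by
      intro φ ψ hφψ
      have heq : ∀ a ∈ s, φ a = ψ a := by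
        intro a ha
        exact congrArg Subtype.val (congrFun hφψ ⟨a, ha⟩)
      have : Algebra.adjoin k (s : Set A) ≤ AlgHom.equalizer φ ψ := by
        rw [Algebra.adjoin_le_iff]
        intro a ha
        exact heq a ha
      apply AlgHom.ext
      intro x
      exact this (hs ▸ Algebra.mem_top : x ∈ Algebra.adjoin k (s : Set A))
    exact absurd (Finite.of_injective _ hinj) (by rw [not_finite_iff_infinite]; exact hfin)
  obtain ⟨a, hE⟩ := hex
  set E := Set.range fun φ : A →ₐ[k] k => φ a with hEdef
  have hEc : E.Countable := Set.countable_range _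
  have hU : ¬ Countable ↥(Eᶜ) := by
    intro hcU
    apply hk
    have : Countable ↥(E ∪ Eᶜ) := (hEc.union (Set.countable_coe_iff.mp hcU)).to_subtype
    rw [Set.union_compl_self] at this
    exact (Set.countable_univ_iff).mp (Set.countable_coe_iff.mpr this)
  -- every a - c with c ∉ E is a unit
  have hunit : ∀ c : k, c ∉ E → IsUnit (a - algebraMap k A c) := by
    intro c hc
    by_contra hu
    obtain ⟨m, hm, hmem⟩ := exists_max_ideal_of_mem_nonunits (mem_nonunits_iff.mpr hu)
    letI : Field (A ⧸ m) := Ideal.Quotient.field m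
    have : Algebra.FiniteType k (A ⧸ m) :=
      Algebra.FiniteType.of_surjective (Ideal.Quotient.mkₐ k m)
        (Ideal.Quotient.mkₐ_surjective k m)
    have : Module.Finite k (A ⧸ m) := finite_of_finite_type_of_isJacobsonRing k (A ⧸ m)
    have hbij : Function.Bijective (algebraMap k (A ⧸ m)) :=
      ⟨(algebraMap k (A ⧸ m)).injective,
        IsAlgClosed.algebraMap_bijective_of_isIntegral.2⟩
    let e : k ≃ₐ[k] (A ⧸ m) := AlgEquiv.ofBijective (Algebra.ofId k (A ⧸ m)) hbij
    let φ : A →ₐ[k] k := (e.symm.toAlgHom).comp (Ideal.Quotient.mkₐ k m)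
    have h0 : φ (a - algebraMap k A c) = 0 := by
      have : Ideal.Quotient.mkₐ k m (a - algebraMap k A c) = 0 :=
        (Ideal.Quotient.eq_zero_iff_mem).mpr hmem
      simp [φ, AlgHom.comp_apply, this]
    have : φ a = c := by
      have := h0
      rw [map_sub, sub_eq_zero, AlgHom.commutes] at this
      exact this
    exact hc ⟨φ, this⟩
  -- linearly independent family indexed by Eᶜ
  let v : ↥(Eᶜ) → A := fun c => ((hunit c c.2).unit⁻¹ : Aˣ)
  have hv : ∀ c : ↥(Eᶜ), (a - algebraMap k A c) * v c = 1 := by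
    intro c
    simpa [v] using (hunit c c.2).mul_val_inv
  have hli : LinearIndependent k v := by
    rw [linearIndependent_iff']
    intro t g hsum i hi
    set P : k[X] := ∑ c ∈ t, C (g c) * ∏ j ∈ t.erase c, (X - C (j : k)) with hP
    have haeval : aeval a P = 0 := by
      have h1 : (∏ j ∈ t, (a - algebraMap k A j)) * (∑ c ∈ t, g c • v c) = 0 := by
        rw [hsum, mul_zero]
      rw [Finset.mul_sum] at h1
      have h2 : ∀ c ∈ t, (∏ j ∈ t, (a - algebraMap k A j)) * (g c • v c)
          = g c • ∏ j ∈ t.erase c, (a - algebraMap k A j) := by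
        intro c hc
        rw [← Finset.prod_erase_mul _ _ hc]
        rw [mul_smul_comm, mul_assoc, hv c, mul_one]
      rw [Finset.sum_congr rfl h2] at h1
      rw [hP]
      rw [map_sum]
      rw [← h1]
      apply Finset.sum_congr rfl
      intro c hc
      rw [map_mul, aeval_C, map_prod]
      simp only [map_sub, aeval_X, aeval_C]
      rw [Algebra.smul_def]
    have hPzero : P = 0 := by
      by_contra hP0
      refine hE ((Polynomial.finite_setOf_isRoot hP0).subset ?_)
      intro x hx
      obtain ⟨φ, rfl⟩ := hx
      have h3 : φ (aeval a P) = 0 := by rw [haeval, map_zero]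
      rw [← aeval_algHom_apply, aeval_def, eval₂_eq_eval_map, Algebra.algebraMap_self,
        Polynomial.map_id] at h3
      exact h3
    have := congrArg (fun q => Polynomial.eval (i : k) q) hPzero
    simp only [hP, eval_finset_sum, eval_mul, eval_C, eval_prod, eval_sub, eval_X,
      eval_zero] at this
    rw [Finset.sum_eq_single i] at this
    · rcases mul_eq_zero.mp this with h' | h'
      · exact h'
      · exfalso
        rw [Finset.prod_eq_zero_iff] at h'
        obtain ⟨j, hj, hj'⟩ := h'
        rw [sub_eq_zero] at hj'
        exact Finset.ne_of_mem_erase hj (Subtype.ext hj'.symm)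
    · intro b hb hbi
      rw [Finset.prod_eq_zero (Finset.mem_erase.mpr ⟨fun h' => hbi h'.symm, hi⟩ : i ∈ t.erase b)]
      · ring
      · rw [sub_self]
    · intro h'
      exact absurd hi h'
  have h1 : #↥(Eᶜ) ≤ Module.rank k A := hli.cardinal_le_rank
  have h2 : Module.rank k A ≤ ℵ₀ := by
    obtain ⟨ι, hι, f, hf⟩ := Algebra.FiniteType.iff_quotient_mvPolynomial'.mp
      (inferInstance : Algebra.FiniteType k A)
    have := f.toLinearMap.rank_le_of_surjective hf
    refine this.trans ?_
    rw [← (MvPolynomial.basisMonomials ι k).mk_eq_rank'']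
    exact Cardinal.mk_le_aleph0
  exact hU (Cardinal.mk_le_aleph0_iff.mp (h1.trans h2))

lemma stmt4_affine (k : Type) [Field k] [IsAlgClosed k] (hk : ¬ Countable k)
    (R : CommRingCat) (q : Spec R ⟶ Spec (CommRingCat.of k)) [LocallyOfFiniteType q]
    (hcount : Countable {t : Spec (CommRingCat.of k) ⟶ Spec R // t ≫ q = 𝟙 _}) :
    Finite {t : Spec (CommRingCat.of k) ⟶ Spec R // t ≫ q = 𝟙 _} := by
  obtain ⟨g, rfl⟩ : ∃ g : CommRingCat.of k ⟶ R, Spec.map g = q :=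
    ⟨Spec.preimage q, Spec.map_preimage q⟩
  letI : Algebra k R := g.hom.toAlgebra
  have hft : RingHom.FiniteType g.hom :=
    (HasRingHomProperty.Spec_iff (P := @LocallyOfFiniteType)).mp inferInstance
  letI : Algebra.FiniteType k R := hft
  -- the injection from algebra homs to sections
  let ψ : (R →ₐ[k] k) → {t : Spec (CommRingCat.of k) ⟶ Spec R // t ≫ Spec.map g = 𝟙 _} := by
    intro φ
    refine ⟨Spec.map (CommRingCat.ofHom (φ.toRingHom : R →+* k)), ?_⟩
    have hcomp : g ≫ CommRingCat.ofHom (φ.toRingHom : R →+* k) = 𝟙 (CommRingCat.of k) := by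
      ext x
      exact φ.commutes x
    rw [← Spec.map_comp, hcomp, Spec.map_id]
  have hψinj : Function.Injective ψ := by
    intro φ₁ φ₂ hφ
    have := congrArg Subtype.val hφ
    have h2 := Spec.map_injective this
    exact AlgHom.ext fun x => DFunLike.congr_fun (congrArg CommRingCat.Hom.hom h2) x
  have hψsurj : Function.Surjective ψ := by
    rintro ⟨t, ht⟩
    let r : R ⟶ CommRingCat.of k := Spec.preimage t
    have hr : Spec.map r = t := Spec.map_preimage t
    have hcomp : g ≫ r = 𝟙 (CommRingCat.of k) := by
      apply Spec.map_injective
      rw [Spec.map_comp, Spec.map_id, hr, ht]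
    let φ : R →ₐ[k] k :=
      { toRingHom := r.hom
        commutes' := fun x => DFunLike.congr_fun (congrArg CommRingCat.Hom.hom hcomp) x }
    refine ⟨φ, Subtype.ext ?_⟩
    exact hr
  have : Countable (R →ₐ[k] k) := Function.Injective.countable hψinj
  have : Finite (R →ₐ[k] k) := stmt4_key hk this
  exact Finite.of_surjective ψ hψsurj

/-- A finite-type scheme over an uncountable algebraically closed field `k` whose
set of `k`-points is countable has only finitely many `k`-points. -/
theorem stmt4 (k : Type) [Field k] [IsAlgClosed k] (hk : ¬ Countable k)
    (X : Scheme) (p : X ⟶ Spec (CommRingCat.of k))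
    [LocallyOfFiniteType p] [QuasiCompact p]
    (hcount : Countable {s : Spec (CommRingCat.of k) ⟶ X // s ≫ p = 𝟙 _}) :
    Finite {s : Spec (CommRingCat.of k) ⟶ X // s ≫ p = 𝟙 _} := by
  haveI hcs : CompactSpace X := by
    constructor
    have := QuasiCompact.isCompact_preimage (f := p) Set.univ isOpen_univ isCompact_univ
    simpa using this
  let 𝒰 := X.affineCover.finiteSubcover
  haveI hio : ∀ i, IsAffine (𝒰.X i) := fun i => by
    exact inferInstance
  let w : ∀ i, Spec Γ(𝒰.X i, ⊤) ⟶ X := fun i => (𝒰.X i).isoSpec.inv ≫ 𝒰.f i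
  let q : ∀ i, Spec Γ(𝒰.X i, ⊤) ⟶ Spec (CommRingCat.of k) := fun i => w i ≫ p
  haveI hlf : ∀ i, LocallyOfFiniteType (q i) := fun i =>
    inferInstanceAs (LocallyOfFiniteType (((𝒰.X i).isoSpec.inv ≫ 𝒰.f i) ≫ p))
  let inj : ∀ i, {t : Spec (CommRingCat.of k) ⟶ Spec Γ(𝒰.X i, ⊤) // t ≫ q i = 𝟙 _} →
      {s : Spec (CommRingCat.of k) ⟶ X // s ≫ p = 𝟙 _} := fun i t =>
    ⟨t.1 ≫ w i, by rw [Category.assoc]; exact t.2⟩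
  have hinjinj : ∀ i, Function.Injective (inj i) := by
    intro i t₁ t₂ ht
    have := congrArg Subtype.val ht
    simp only [inj] at this
    exact Subtype.ext ((cancel_mono (w i)).mp this)
  haveI : ∀ i, Countable {t : Spec (CommRingCat.of k) ⟶ Spec Γ(𝒰.X i, ⊤) // t ≫ q i = 𝟙 _} :=
    fun i => Function.Injective.countable (hinjinj i)
  haveI : ∀ i, Finite {t : Spec (CommRingCat.of k) ⟶ Spec Γ(𝒰.X i, ⊤) // t ≫ q i = 𝟙 _} :=
    fun i => stmt4_affine k hk _ (q i) (this i)
  -- surjectivity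
  haveI : Unique ↥(Spec (CommRingCat.of k)) := inferInstanceAs (Unique (PrimeSpectrum k))
  let F : (Σ i, {t : Spec (CommRingCat.of k) ⟶ Spec Γ(𝒰.X i, ⊤) // t ≫ q i = 𝟙 _}) →
      {s : Spec (CommRingCat.of k) ⟶ X // s ≫ p = 𝟙 _} := fun x => inj x.1 x.2
  have hF : Function.Surjective F := by
    rintro ⟨s, hs⟩
    let x₀ : ↥(Spec (CommRingCat.of k)) := default
    let i := 𝒰.idx (s.base x₀)
    have hsub : Set.range s.base ⊆ Set.range (𝒰.f i).base := by
      rintro _ ⟨x, rfl⟩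
      have : x = x₀ := Subsingleton.elim _ _
      rw [this]
      exact 𝒰.covers _
    let l := IsOpenImmersion.lift (𝒰.f i) s hsub
    have hl : l ≫ 𝒰.f i = s := IsOpenImmersion.lift_fac _ _ hsub
    refine ⟨⟨i, ⟨l ≫ (𝒰.X i).isoSpec.hom, ?_⟩⟩, ?_⟩
    · show (l ≫ (𝒰.X i).isoSpec.hom) ≫ ((𝒰.X i).isoSpec.inv ≫ 𝒰.f i) ≫ p = 𝟙 _
      simp only [Category.assoc, Iso.hom_inv_id_assoc]
      rw [← Category.assoc, hl]
      exact hs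
    · apply Subtype.ext
      show (l ≫ (𝒰.X i).isoSpec.hom) ≫ (𝒰.X i).isoSpec.inv ≫ 𝒰.f i = s
      simp only [Category.assoc, Iso.hom_inv_id_assoc]
      exact hl
  exact Finite.of_surjective F hF
end

section
/- With the same cover of the cuspidal cubic, the Čech 1-cocycle dt ∈ Γ(U ∩ V, Ω¹) is not a coboundary: there do not exist Kähler differential forms ω₁ on Spec k[t⁻¹] and ω₂ on Spec k[t², t³] whose difference restricted to Spec k[t, t⁻¹] equals dt. -/
open LaurentPolynomial

lemma aux_adjoin_support {k : Type*} [CommRing k] (s : Set (LaurentPolynomial k))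
    (P : ℤ → Prop) (h0 : P 0) (hadd : ∀ a b, P a → P b → P (a + b))
    (hs : ∀ p ∈ s, ∀ n : ℤ, p.coeff n ≠ 0 → P n)
    {f : LaurentPolynomial k} (hf : f ∈ Algebra.adjoin k s) :
    ∀ n : ℤ, f.coeff n ≠ 0 → P n := by
  induction hf using Algebra.adjoin_induction with
  | mem p hp => exact hs p hp
  | algebraMap r =>
    intro n hn
    rcases eq_or_ne n 0 with rfl | hne
    · exact h0
    · exfalso
      apply hn
      rw [Algebra.algebraMap_eq_smul_one]
      show (r • (1 : LaurentPolynomial k)).coeff n = 0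
      rw [AddMonoidAlgebra.coeff_smul_apply, AddMonoidAlgebra.one_def, AddMonoidAlgebra.coeff_single,
        Finsupp.single_eq_of_ne' (Ne.symm hne), smul_zero]
  | add x y hx hy ihx ihy =>
    intro n hn
    have : x.coeff n ≠ 0 ∨ y.coeff n ≠ 0 := by
      by_contra hc
      push_neg at hc
      apply hn
      show x.coeff n + y.coeff n = 0
      rw [hc.1, hc.2, add_zero]
    rcases this with h | h
    · exact ihx n h
    · exact ihy n h
  | mul x y hx hy ihx ihy =>
    intro n hn
    have hmem : n ∈ (x * y).coeff.support := Finsupp.mem_support_iff.mpr hn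
    have := AddMonoidAlgebra.support_coeff_mul_subset x y hmem
    rw [Finset.mem_add] at this
    obtain ⟨a, ha, b, hb, rfl⟩ := this
    exact hadd a b (ihx a (Finsupp.mem_support_iff.mp ha))
      (ihy b (Finsupp.mem_support_iff.mp hb))

lemma aux_T_mul_apply {k : Type*} [CommRing k] (m n : ℤ) (f : LaurentPolynomial k) :
    ((T m : LaurentPolynomial k) * f).coeff n = f.coeff (-m + n) := by
  show ((AddMonoidAlgebra.single m 1 : LaurentPolynomial k) * f).coeff n = f.coeff (-m + n)
  rw [AddMonoidAlgebra.coeff_single_mul_apply, one_mul]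

/-- The Čech 1-cocycle `dt` on the standard cover of the cuspidal cubic is not a
coboundary.  In coordinates in `Ω¹_{k[t,t⁻¹]/k} = k[t,t⁻¹]·dt`: differentials on `k[t⁻¹]` are
`f · d(t⁻¹) = -f·t⁻² dt` with `f ∈ k[t⁻¹]`, and differentials on `k[t²,t³]` map to
`g·d(t²) + h·d(t³) = (2t·g + 3t²·h) dt` with `g, h ∈ k[t²,t³]`; the claim is that `dt`
(coefficient `1`) is not a difference `ω₁ - ω₂` of such forms. -/
theorem stmt7 (k : Type*) [Field k] [CharZero k] :
    ¬ ∃ f ∈ Algebra.adjoin k {(T (-1) : LaurentPolynomial k)},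
        ∃ g ∈ Algebra.adjoin k {(T 2 : LaurentPolynomial k), T 3},
          ∃ h ∈ Algebra.adjoin k {(T 2 : LaurentPolynomial k), T 3},
            (1 : LaurentPolynomial k) =
              (-(T (-2)) * f) - (2 * T 1 * g + 3 * T 2 * h) := by
  rintro ⟨f, hf, g, hg, h, hh, heq⟩
  have hf' : ∀ n : ℤ, f.coeff n ≠ 0 → n ≤ 0 := by
    refine aux_adjoin_support _ (fun n => n ≤ 0) le_rfl (fun a b ha hb => add_nonpos ha hb) ?_ hf
    rintro p rfl n hn
    have : n = -1 := by
      by_contra hc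
      exact hn (Finsupp.single_eq_of_ne' (Ne.symm hc))
    omega
  have hgh : ∀ p : LaurentPolynomial k,
      p ∈ Algebra.adjoin k {(T 2 : LaurentPolynomial k), T 3} →
      ∀ n : ℤ, p.coeff n ≠ 0 → 0 ≤ n := by
    intro p hp
    refine aux_adjoin_support _ (fun n => 0 ≤ n) le_rfl (fun a b ha hb => add_nonneg ha hb) ?_ hp
    rintro q (rfl | rfl) n hn
    · have : n = 2 := by
        by_contra hc
        exact hn (Finsupp.single_eq_of_ne' (Ne.symm hc))
      omega
    · have : n = 3 := by
        by_contra hc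
        exact hn (Finsupp.single_eq_of_ne' (Ne.symm hc))
      omega
  have hf2 : f.coeff 2 = 0 := by
    by_contra hc; have := hf' 2 hc; omega
  have hg1 : g.coeff (-1) = 0 := by
    by_contra hc; have := hgh g hg (-1) hc; omega
  have hh2 : h.coeff (-2) = 0 := by
    by_contra hc; have := hgh h hh (-2) hc; omega
  have key := congrArg (fun p : LaurentPolynomial k => p.coeff 0) heq
  have e1 : (1 : LaurentPolynomial k).coeff 0 = 1 := by
    rw [AddMonoidAlgebra.one_def]
    exact Finsupp.single_eq_same
  have e5 : ((-(T (-2)) * f - (2 * T 1 * g + 3 * T 2 * h)) : LaurentPolynomial k).coeff 0 = 0 := by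
    have h1 : (T (-2) * f : LaurentPolynomial k).coeff 0 = f.coeff 2 := by rw [aux_T_mul_apply]; norm_num
    have h2 : (T 1 * g : LaurentPolynomial k).coeff 0 = g.coeff (-1) := by rw [aux_T_mul_apply]; norm_num
    have h3 : (T 2 * h : LaurentPolynomial k).coeff 0 = h.coeff (-2) := by rw [aux_T_mul_apply]; norm_num
    have expand : (-(T (-2)) * f - (2 * T 1 * g + 3 * T 2 * h) : LaurentPolynomial k)
        = -(T (-2) * f) - ((T 1 * g + T 1 * g) + (T 2 * h + T 2 * h + T 2 * h)) := by ring
    rw [expand]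
    show (-(T (-2) * f) - ((T 1 * g + T 1 * g) + (T 2 * h + T 2 * h + T 2 * h))
        : LaurentPolynomial k).coeff 0 = 0
    rw [AddMonoidAlgebra.coeff_sub, AddMonoidAlgebra.coeff_neg, AddMonoidAlgebra.coeff_add,
      AddMonoidAlgebra.coeff_add, AddMonoidAlgebra.coeff_add, AddMonoidAlgebra.coeff_add,
      Finsupp.sub_apply, Finsupp.neg_apply, Finsupp.add_apply, Finsupp.add_apply,
      Finsupp.add_apply, Finsupp.add_apply]
    show -((T (-2) * f : LaurentPolynomial k).coeff 0) -
        (((T 1 * g : LaurentPolynomial k).coeff 0 + (T 1 * g : LaurentPolynomial k).coeff 0) +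
         ((T 2 * h : LaurentPolynomial k).coeff 0 + (T 2 * h : LaurentPolynomial k).coeff 0 +
          (T 2 * h : LaurentPolynomial k).coeff 0)) = 0
    rw [h1, h2, h3, hf2, hg1, hh2]
    ring
  rw [e1, e5] at key
  exact one_ne_zero key
end
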